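/- Let K ⊆ ℝⁿ be an open convex set and h : K → ℝ be differentiable and strongly quasiconvex with modulus γ > 0. Then for every x, y ∈ K with h(x) ≤ h(y), one has ⟨∇h(y), x - y⟩ ≤ -(γ/2)‖y - x‖². -/

import Mathlib

theorem first_order_characterization_strongly_quasiconvex
    {n : ℕ} (K : Set (EuclideanSpace ℝ (Fin n))) (hKo : IsOpen K) (hKconv : Convex ℝ K)
    (h : EuclideanSpace ℝ (Fin n) → ℝ) (g : EuclideanSpace ℝ (Fin n) → EuclideanSpace ℝ (Fin n))
    (hgrad : ∀ x ∈ K, HasGradientAt h (g x) x)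
    (γ : ℝ) (hγ : 0 < γ)
    (hsq : ∀ x ∈ K, ∀ y ∈ K, ∀ lam : ℝ, lam ∈ Set.Icc (0:ℝ) 1 →
      h (lam • y + (1 - lam) • x) ≤
        max (h y) (h x) - lam * (1 - lam) * (γ / 2) * ‖x - y‖ ^ 2) :
    ∀ x ∈ K, ∀ y ∈ K, h x ≤ h y →
      (inner ℝ (g y) (x - y) : ℝ) ≤ -(γ / 2) * ‖y - x‖ ^ 2 := by
  intro x hx y hy hxy
  set c : ℝ := inner ℝ (g y) (x - y) with hc
  set φ : ℝ → ℝ := fun t => h (y + t • (x - y)) with hφdef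
  have hφ : HasDerivAt φ c 0 := by
    have hcurve : HasDerivAt (fun t : ℝ => y + t • (x - y)) (x - y) 0 := by
      simpa using ((hasDerivAt_id (0 : ℝ)).smul_const (x - y)).const_add y
    have hF : HasFDerivAt h (InnerProductSpace.toDual ℝ _ (g y)) y :=
      (hgrad y hy)
    have hF' : HasFDerivAt h (InnerProductSpace.toDual ℝ _ (g y))
        (y + (0 : ℝ) • (x - y)) := by simpa using hF
    have := hF'.comp_hasDerivAt 0 hcurve
    exact this
  have hslope : Filter.Tendsto (slope φ 0) (nhdsWithin 0 (Set.Ioi 0)) (nhds c) :=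
    (hasDerivAt_iff_tendsto_slope.mp hφ).mono_left
      (nhdsWithin_mono 0 (fun t ht => ne_of_gt ht))
  have hg : Filter.Tendsto (fun t : ℝ => -((1 - t) * (γ / 2) * ‖y - x‖ ^ 2))
      (nhdsWithin 0 (Set.Ioi 0)) (nhds (-(γ / 2) * ‖y - x‖ ^ 2)) := by
    have : Filter.Tendsto (fun t : ℝ => -((1 - t) * (γ / 2) * ‖y - x‖ ^ 2))
        (nhds 0) (nhds (-((1 - (0:ℝ)) * (γ / 2) * ‖y - x‖ ^ 2))) := by
      exact (Continuous.tendsto (by continuity) 0)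
    simpa using this.mono_left (nhdsWithin_le_nhds (s := Set.Ioi 0))
  have hev : ∀ᶠ t in nhdsWithin (0:ℝ) (Set.Ioi 0),
      slope φ 0 t ≤ -((1 - t) * (γ / 2) * ‖y - x‖ ^ 2) := by
    filter_upwards [Ioc_mem_nhdsGT_of_mem (Set.mem_Ico.mpr ⟨le_refl (0:ℝ), one_pos⟩)]
      with t ht
    obtain ⟨ht0, ht1⟩ := ht
    have hkey := hsq y hy x hx t (Set.mem_Icc.mpr ⟨le_of_lt ht0, ht1⟩)
    have hmax : max (h x) (h y) = h y := max_eq_right hxy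
    have heq : t • x + (1 - t) • y = y + t • (x - y) := by
      module
    rw [hmax, heq] at hkey
    have hφ0 : φ 0 = h y := by simp [φ]
    have hsub : φ t - φ 0 ≤ -(t * ((1 - t) * (γ / 2) * ‖y - x‖ ^ 2)) := by
      rw [hφ0]
      have : φ t ≤ h y - t * (1 - t) * (γ / 2) * ‖y - x‖ ^ 2 := hkey
      linarith
    have hsl : slope φ 0 t = (φ t - φ 0) / t := by
      simp [slope_def_field]
    rw [hsl, div_le_iff₀ ht0]
    calc φ t - φ 0 ≤ -(t * ((1 - t) * (γ / 2) * ‖y - x‖ ^ 2)) := hsub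
      _ = -((1 - t) * (γ / 2) * ‖y - x‖ ^ 2) * t := by ring
  exact le_of_tendsto_of_tendsto hslope hg hev
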